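/- Let n₀ ≤ n be natural numbers and let f : ℂ → ℂ be holomorphic on the half-plane {s : Re s > n₀ − 1/2}. Let c = (n₀ + n)/2 and let r be a real number with (n − n₀)/2 < r < (n − n₀)/2 + 1/2, so that the circle |s − c| = r encircles exactly the integers n₀, n₀+1, …, n and is contained in the half-plane {Re s > n₀ − 1/2}. Then Σ_{k=n₀}^{n} C(n,k)(−1)^k f(k) = ((−1)^n n!/(2πi)) · ∮_{|s−c|=r} f(s)/(s(s−1)(s−2)⋯(s−n)) ds, where the circle is traversed counterclockwise (Nörlund–Rice integral representation). -/

import Mathlib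

open Complex Finset

lemma prod_range_sub_nat (k : ℕ) : ∏ j ∈ Finset.range k, ((k : ℂ) - (j : ℂ)) = k.factorial := by
  have h1 : ∀ j ∈ Finset.range k, ((k : ℂ) - (j : ℂ)) = ((k - j : ℕ) : ℂ) := by
    intro j hj
    rw [Finset.mem_range] at hj
    push_cast [Nat.cast_sub hj.le]
    ring
  rw [Finset.prod_congr rfl h1, ← Nat.cast_prod]
  congr 1
  have := Finset.prod_range_reflect (fun j => j + 1) k
  calc ∏ j ∈ Finset.range k, (k - j)
      = ∏ j ∈ Finset.range k, ((fun j => j + 1) (k - 1 - j)) := by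
        refine Finset.prod_congr rfl fun j hj => ?_
        rw [Finset.mem_range] at hj
        show k - j = k - 1 - j + 1
        omega
    _ = ∏ j ∈ Finset.range k, (j + 1) := this
    _ = k.factorial := by rw [Finset.prod_range_add_one_eq_factorial]

lemma D_val (n k : ℕ) (hk : k ≤ n) :
    ∏ j ∈ (Finset.range (n + 1)).erase k, ((k : ℂ) - (j : ℂ)) =
      (-1) ^ (n - k) * k.factorial * (n - k).factorial := by
  have hset : (Finset.range (n + 1)).erase k = Finset.range k ∪ Finset.Ico (k + 1) (n + 1) := by
    ext j
    simp only [Finset.mem_erase, Finset.mem_range, Finset.mem_union, Finset.mem_Ico]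
    omega
  have hdisj : Disjoint (Finset.range k) (Finset.Ico (k + 1) (n + 1)) := by
    rw [Finset.disjoint_left]
    intro j hj hj'
    rw [Finset.mem_range] at hj
    rw [Finset.mem_Ico] at hj'
    omega
  rw [hset, Finset.prod_union hdisj, prod_range_sub_nat]
  have h2 : ∏ j ∈ Finset.Ico (k + 1) (n + 1), ((k : ℂ) - (j : ℂ)) =
      (-1) ^ (n - k) * (n - k).factorial := by
    have h3 : ∀ j ∈ Finset.Ico (k + 1) (n + 1), ((k : ℂ) - (j : ℂ)) = -(((j - k : ℕ)) : ℂ) := by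
      intro j hj
      rw [Finset.mem_Ico] at hj
      have := hj.1
      push_cast [Nat.cast_sub (le_of_lt (Nat.lt_of_succ_le hj.1))]
      ring
    rw [Finset.prod_congr rfl h3,
      Finset.prod_congr rfl (fun x _ => (neg_eq_neg_one_mul ((x - k : ℕ) : ℂ))),
      Finset.prod_mul_distrib, Finset.prod_const, Nat.card_Ico]
    have h4 : ∏ j ∈ Finset.Ico (k + 1) (n + 1), ((j - k : ℕ) : ℂ) = ((n - k).factorial : ℂ) := by
      rw [← Nat.cast_prod]
      congr 1
      rw [Finset.prod_Ico_eq_prod_range]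
      have : ∀ j ∈ Finset.range (n + 1 - (k + 1)), (k + 1 + j - k) = j + 1 := fun j _ => by omega
      rw [Finset.prod_congr rfl this, Finset.prod_range_add_one_eq_factorial]
      congr 1
      omega
    rw [h4]
    congr 2
    omega
  rw [h2]
  ring

lemma partial_frac (n : ℕ) (t : ℂ) (ht : ∀ j ∈ Finset.range (n + 1), t ≠ (j : ℂ)) :
    (∏ j ∈ Finset.range (n + 1), (t - (j : ℂ)))⁻¹ =
      ∑ k ∈ Finset.range (n + 1),
        (∏ j ∈ (Finset.range (n + 1)).erase k, ((k : ℂ) - (j : ℂ)))⁻¹ * (t - (k : ℂ))⁻¹ := by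
  have hinj : Set.InjOn (Nat.cast : ℕ → ℂ) (Finset.range (n + 1)) :=
    fun a _ b _ h => Nat.cast_injective h
  have hne : (Finset.range (n + 1)).Nonempty := ⟨0, by simp⟩
  have hs := Lagrange.sum_basis hinj hne
  have h1 := congrArg (Polynomial.eval t) hs
  rw [Polynomial.eval_finset_sum, Polynomial.eval_one] at h1
  set P : ℂ := ∏ j ∈ Finset.range (n + 1), (t - (j : ℂ)) with hP
  have hPne : P ≠ 0 := Finset.prod_ne_zero_iff.2 fun j hj => sub_ne_zero.2 (ht j hj)
  have h2 : ∀ k ∈ Finset.range (n + 1),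
      Polynomial.eval t (Lagrange.basis (Finset.range (n + 1)) (Nat.cast : ℕ → ℂ) k) =
        (∏ j ∈ (Finset.range (n + 1)).erase k, ((k : ℂ) - (j : ℂ)))⁻¹ * ((t - (k : ℂ))⁻¹ * P) := by
    intro k hk
    rw [Lagrange.basis, Polynomial.eval_prod]
    have : ∀ j ∈ (Finset.range (n + 1)).erase k,
        Polynomial.eval t (Lagrange.basisDivisor (k : ℂ) (j : ℂ)) =
          ((k : ℂ) - (j : ℂ))⁻¹ * (t - (j : ℂ)) := by
      intro j _
      simp [Lagrange.basisDivisor]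
    rw [Finset.prod_congr rfl this, Finset.prod_mul_distrib, ← Finset.prod_inv_distrib]
    congr 1
    have hmul := Finset.mul_prod_erase (Finset.range (n + 1)) (fun j => t - (j : ℂ)) hk
    have htk : t - (k : ℂ) ≠ 0 := sub_ne_zero.2 (ht k hk)
    field_simp
    rw [mul_comm]
    exact hmul
  rw [Finset.sum_congr rfl h2] at h1
  have h3 : ∑ k ∈ Finset.range (n + 1),
      (∏ j ∈ (Finset.range (n + 1)).erase k, ((k : ℂ) - (j : ℂ)))⁻¹ * (t - (k : ℂ))⁻¹ =
      (∑ k ∈ Finset.range (n + 1),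
        (∏ j ∈ (Finset.range (n + 1)).erase k, ((k : ℂ) - (j : ℂ)))⁻¹ * ((t - (k : ℂ))⁻¹ * P))
        * P⁻¹ := by
    rw [Finset.sum_mul]
    refine Finset.sum_congr rfl fun k _ => ?_
    rw [mul_assoc, mul_assoc, mul_inv_cancel₀ hPne, mul_one]
  rw [h3, h1, one_mul]

lemma circleIntegral_finset_sum {ι : Type*} (t : Finset ι) (g : ι → ℂ → ℂ) (c : ℂ) (R : ℝ)
    (h : ∀ i ∈ t, CircleIntegrable (g i) c R) :
    (∮ z in C(c, R), ∑ i ∈ t, g i z) = ∑ i ∈ t, ∮ z in C(c, R), g i z := by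
  simp only [circleIntegral, Finset.smul_sum]
  rw [intervalIntegral.integral_finset_sum]
  exact fun i hi => (h i hi).out

/-- **Nörlund–Rice integral representation.** If `f` is holomorphic on the half-plane
`Re s > n₀ - 1/2`, then the finite differences `∑_{k=n₀}^n C(n,k) (-1)^k f(k)` are given by
the contour integral `((-1)^n n!/(2πi)) ∮ f(s)/(s(s-1)⋯(s-n)) ds` over a circle centered at
`c = (n₀+n)/2` of radius `r` with `(n-n₀)/2 < r < (n-n₀)/2 + 1/2`, which encircles exactly
the integers `n₀, …, n` and stays in the half-plane. -/
theorem norlund_rice_integral (n₀ n : ℕ) (hn : n₀ ≤ n) (f : ℂ → ℂ)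
    (hf : DifferentiableOn ℂ f {s : ℂ | (n₀ : ℝ) - 1 / 2 < s.re})
    (c : ℂ) (hc : c = ((n₀ : ℂ) + (n : ℂ)) / 2)
    (r : ℝ) (hr₁ : ((n : ℝ) - (n₀ : ℝ)) / 2 < r) (hr₂ : r < ((n : ℝ) - (n₀ : ℝ)) / 2 + 1 / 2) :
    ∑ k ∈ Finset.Icc n₀ n, (n.choose k : ℂ) * (-1) ^ k * f k =
      (-1) ^ n * (n.factorial : ℂ) / (2 * Real.pi * Complex.I) *
        ∮ s in C(c, r), f s / ∏ j ∈ Finset.range (n + 1), (s - (j : ℂ)) := by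
  have hnn : (n₀ : ℝ) ≤ (n : ℝ) := Nat.cast_le.2 hn
  have hr0 : 0 < r := lt_of_le_of_lt (by linarith) hr₁
  set U : Set ℂ := {s : ℂ | (n₀ : ℝ) - 1 / 2 < s.re} with hU
  have hUopen : IsOpen U := isOpen_lt continuous_const Complex.continuous_re
  have hcR : c = (((((n₀ : ℝ) + (n : ℝ)) / 2) : ℝ) : ℂ) := by rw [hc]; push_cast; ring
  have hcre : c.re = ((n₀ : ℝ) + (n : ℝ)) / 2 := by rw [hcR, Complex.ofReal_re]
  have hsub : Metric.closedBall c r ⊆ U := by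
    intro s hs
    rw [Metric.mem_closedBall, Complex.dist_eq] at hs
    have h1 : |s.re - c.re| ≤ ‖s - c‖ := by
      simpa using Complex.abs_re_le_norm (s - c)
    have h2 := (abs_le.1 (h1.trans hs)).1
    simp only [hU, Set.mem_setOf_eq]
    linarith [hcre]
  have hnode : ∀ k ∈ Finset.Icc n₀ n, (k : ℂ) ∈ Metric.ball c r := by
    intro k hk
    rw [Finset.mem_Icc] at hk
    have hk1 : (n₀ : ℝ) ≤ (k : ℝ) := Nat.cast_le.2 hk.1
    have hk2 : (k : ℝ) ≤ (n : ℝ) := Nat.cast_le.2 hk.2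
    rw [Metric.mem_ball, Complex.dist_eq]
    have h1 : (k : ℂ) - c = ((((k : ℝ) - ((n₀ : ℝ) + (n : ℝ)) / 2) : ℝ) : ℂ) := by
      rw [hcR]; push_cast; ring
    rw [h1, Complex.norm_real, Real.norm_eq_abs, abs_lt]
    constructor <;> linarith
  have houtside : ∀ k : ℕ, k < n₀ → ∀ s ∈ U, s ≠ (k : ℂ) := by
    intro k hk s hsU heq
    have h1 : (k : ℝ) + 1 ≤ (n₀ : ℝ) := by exact_mod_cast Nat.succ_le_of_lt hk
    have h2 : s.re = (k : ℝ) := by rw [heq]; simp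
    simp only [hU, Set.mem_setOf_eq, h2] at hsU
    linarith
  have hsphere : ∀ s ∈ Metric.sphere c r, ∀ j ∈ Finset.range (n + 1), s ≠ (j : ℂ) := by
    intro s hs j hj heq
    rw [Finset.mem_range] at hj
    by_cases hjn : n₀ ≤ j
    · have h1 := hnode j (Finset.mem_Icc.2 ⟨hjn, by omega⟩)
      rw [Metric.mem_ball] at h1
      rw [Metric.mem_sphere] at hs
      rw [← heq] at h1
      rw [hs] at h1
      exact lt_irrefl _ h1
    · exact houtside j (by omega) s (hsub (Metric.sphere_subset_closedBall hs)) heq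
  set D : ℕ → ℂ := fun k => ∏ j ∈ (Finset.range (n + 1)).erase k, ((k : ℂ) - (j : ℂ)) with hDdef
  have hD : ∀ k, k ≤ n → D k = (-1) ^ (n - k) * k.factorial * (n - k).factorial := fun k hk =>
    D_val n k hk
  have hsphU : Metric.sphere c r ⊆ U := fun s hs => hsub (Metric.sphere_subset_closedBall hs)
  have hfc : ContinuousOn f (Metric.sphere c r) := hf.continuousOn.mono hsphU
  have hcongr : Set.EqOn (fun s => f s / ∏ j ∈ Finset.range (n + 1), (s - (j : ℂ)))
      (fun s => ∑ k ∈ Finset.range (n + 1), (D k)⁻¹ * ((s - (k : ℂ))⁻¹ * f s))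
      (Metric.sphere c r) := by
    intro s hs
    simp only []
    rw [div_eq_mul_inv, partial_frac n s (hsphere s hs), Finset.mul_sum]
    exact Finset.sum_congr rfl fun k _ => by ring
  rw [circleIntegral.integral_congr hr0.le hcongr]
  have hint : ∀ k ∈ Finset.range (n + 1),
      CircleIntegrable (fun s => (D k)⁻¹ * ((s - (k : ℂ))⁻¹ * f s)) c r := by
    intro k hk
    refine ContinuousOn.circleIntegrable hr0.le ?_
    refine continuousOn_const.mul (ContinuousOn.mul ?_ hfc)
    exact ContinuousOn.inv₀ (continuousOn_id.sub continuousOn_const)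
      fun s hs => sub_ne_zero.2 (hsphere s hs k hk)
  rw [circleIntegral_finset_sum _ _ _ _ hint]
  have hball_diff : DiffContOnCl ℂ f (Metric.ball c r) :=
    ⟨hf.mono (Metric.ball_subset_closedBall.trans hsub),
      hf.continuousOn.mono (Metric.closure_ball_subset_closedBall.trans hsub)⟩
  have heval : ∀ k ∈ Finset.range (n + 1),
      (∮ s in C(c, r), (D k)⁻¹ * ((s - (k : ℂ))⁻¹ * f s)) =
        if k ∈ Finset.Icc n₀ n then (D k)⁻¹ * (2 * Real.pi * Complex.I * f k) else 0 := by
    intro k hk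
    rw [Finset.mem_range] at hk
    rw [circleIntegral.integral_const_mul]
    by_cases hmem : k ∈ Finset.Icc n₀ n
    · rw [if_pos hmem]
      have h1 := hball_diff.circleIntegral_sub_inv_smul (hnode k hmem)
      simp only [smul_eq_mul] at h1
      rw [h1]
    · rw [if_neg hmem]
      have hk0 : k < n₀ := by
        rw [Finset.mem_Icc] at hmem
        omega
      have hdiff : DifferentiableOn ℂ (fun s => (s - (k : ℂ))⁻¹ * f s) U := by
        refine DifferentiableOn.mul ?_ hf
        refine DifferentiableOn.inv (differentiableOn_id.sub (differentiableOn_const _))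
          fun s hs => sub_ne_zero.2 (houtside k hk0 s hs)
      have h0 := Complex.circleIntegral_eq_zero_of_differentiable_on_off_countable hr0.le
        (Set.countable_empty) (hdiff.continuousOn.mono hsub)
        (fun z hz => (hdiff.differentiableAt
          (hUopen.mem_nhds (hsub (Metric.ball_subset_closedBall hz.1)))))
      rw [h0, mul_zero]
  rw [Finset.sum_congr rfl heval, Finset.sum_ite_mem]
  have hinter : Finset.range (n + 1) ∩ Finset.Icc n₀ n = Finset.Icc n₀ n := by
    ext j
    simp only [Finset.mem_inter, Finset.mem_range, Finset.mem_Icc]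
    omega
  rw [hinter, Finset.mul_sum]
  refine Finset.sum_congr rfl fun k hk => ?_
  rw [Finset.mem_Icc] at hk
  rw [hD k hk.2]
  have hpi : ((Real.pi : ℂ)) ≠ 0 := Complex.ofReal_ne_zero.2 Real.pi_ne_zero
  have h2pi : (2 * (Real.pi : ℂ) * Complex.I) ≠ 0 := by
    simp [Real.pi_ne_zero, Complex.I_ne_zero]
  have hkf : ((k.factorial : ℂ)) ≠ 0 := Nat.cast_ne_zero.2 k.factorial_ne_zero
  have hnkf : (((n - k).factorial : ℂ)) ≠ 0 := Nat.cast_ne_zero.2 (n - k).factorial_ne_zero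
  have hsgn : ((-1 : ℂ)) ^ (n - k) * (-1) ^ k = (-1) ^ n := by
    rw [← pow_add]
    congr 1
    omega
  have hcomb : ((n.choose k : ℂ)) * k.factorial * (n - k).factorial = n.factorial := by
    exact_mod_cast congrArg (Nat.cast : ℕ → ℂ) (Nat.choose_mul_factorial_mul_factorial hk.2)
  have hsne : ((-1 : ℂ)) ^ (n - k) ≠ 0 := pow_ne_zero _ (by norm_num)
  field_simp
  linear_combination
    (f k * ((-1 : ℂ)) ^ k * ((-1 : ℂ)) ^ (n - k)) * hcomb +
    (f k * (n.factorial : ℂ)) * hsgn
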